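/- Let X_i, i ≥ 1, be sampled from the Zipf–Poisson ensemble with parameter α > 1. Let n = n(N) be a positive-integer-valued function of N such that n(N) ≥ C N^{1/(α+2)} for some constant 0 < C < ∞ and all large enough N. Then lim_{N→∞} Pr(X_1 > X_2 > … > X_{n(N)}) = 0. -/

import Mathlib

set_option maxHeartbeats 1000000

open MeasureTheory ProbabilityTheory

noncomputable def zpPois (l : ℝ) (k : ℕ) : ℝ := Real.exp (-l) * l ^ k / (Nat.factorial k)

lemma zpPois_nonneg {l : ℝ} (hl : 0 ≤ l) (k : ℕ) : 0 ≤ zpPois l k := by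
  unfold zpPois; positivity

lemma zpPois_summable (l : ℝ) : Summable (zpPois l) := by
  unfold zpPois
  simpa [mul_div_assoc] using (Real.summable_pow_div_factorial l).mul_left (Real.exp (-l))

lemma zpPois_tsum (l : ℝ) : ∑' k, zpPois l k = 1 := by
  unfold zpPois
  simp_rw [mul_div_assoc]
  rw [tsum_mul_left]
  have h : ∑' k : ℕ, l ^ k / (Nat.factorial k : ℝ) = Real.exp l := by
    rw [Real.exp_eq_exp_ℝ, NormedSpace.exp_eq_tsum_div]
  rw [h, ← Real.exp_add]
  simp

lemma zpPois_tsum_ofReal (l : ℝ) (hl : 0 ≤ l) :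
    ∑' k, ENNReal.ofReal (zpPois l k) = 1 := by
  rw [← ENNReal.ofReal_tsum_of_nonneg (zpPois_nonneg hl) (zpPois_summable l), zpPois_tsum]
  simp

lemma stirlingSeq_le (k : ℕ) (hk : 1 ≤ k) : Stirling.stirlingSeq k ≤ Real.exp 1 / Real.sqrt 2 := by
  obtain ⟨j, rfl⟩ := Nat.exists_eq_add_of_le hk
  have h := Stirling.log_stirlingSeq'_antitone (Nat.zero_le j)
  simp only [Function.comp] at h
  have h1 : Stirling.stirlingSeq (1 + j) = Stirling.stirlingSeq (Nat.succ j) := by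
    congr 1; omega
  rw [h1]
  calc Stirling.stirlingSeq (Nat.succ j)
      = Real.exp (Real.log (Stirling.stirlingSeq (Nat.succ j))) := by
        rw [Real.exp_log (Stirling.stirlingSeq'_pos j)]
    _ ≤ Real.exp (Real.log (Stirling.stirlingSeq (Nat.succ 0))) := Real.exp_le_exp.2 h
    _ = Stirling.stirlingSeq 1 := Real.exp_log (Stirling.stirlingSeq'_pos 0)
    _ = Real.exp 1 / Real.sqrt 2 := Stirling.stirlingSeq_one

lemma factorial_le_stirling (k : ℕ) (hk : 1 ≤ k) :
    (Nat.factorial k : ℝ) ≤ Real.exp 1 * Real.sqrt k * ((k : ℝ) / Real.exp 1) ^ k := by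
  have hkpos : (0:ℝ) < k := by exact_mod_cast hk
  have hbase : (0:ℝ) < (k : ℝ) / Real.exp 1 := by positivity
  have hdef : (Nat.factorial k : ℝ) =
      Stirling.stirlingSeq k * (Real.sqrt (2 * k) * ((k : ℝ) / Real.exp 1) ^ k) := by
    rw [Stirling.stirlingSeq]
    field_simp
  rw [hdef, Real.sqrt_mul (by norm_num : (0:ℝ) ≤ 2)]
  have h2 : (0:ℝ) < Real.sqrt 2 := by positivity
  calc Stirling.stirlingSeq k * (Real.sqrt 2 * Real.sqrt k * ((k : ℝ) / Real.exp 1) ^ k)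
      ≤ (Real.exp 1 / Real.sqrt 2) * (Real.sqrt 2 * Real.sqrt k * ((k : ℝ) / Real.exp 1) ^ k) := by
        apply mul_le_mul_of_nonneg_right (stirlingSeq_le k hk)
        positivity
    _ = Real.exp 1 * Real.sqrt k * ((k : ℝ) / Real.exp 1) ^ k := by
        field_simp

lemma zpPois_lower {μ : ℝ} (hμ : 0 < μ) (k : ℕ) (hk : 1 ≤ k) :
    Real.exp (-((k : ℝ) - μ) ^ 2 / μ) / (Real.exp 1 * Real.sqrt k) ≤ zpPois μ k := by
  set t : ℝ := (k : ℝ) with ht_def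
  have ht : (0:ℝ) < t := by simp only [ht_def]; exact_mod_cast Nat.lt_of_lt_of_le Nat.zero_lt_one hk
  have hfac : (0:ℝ) < (Nat.factorial k : ℝ) := by exact_mod_cast Nat.factorial_pos k
  have hst : (0:ℝ) < Real.exp 1 * Real.sqrt t * (t / Real.exp 1) ^ k := by positivity
  -- step 1 : replace k! by the Stirling bound
  have step1 : Real.exp (-μ) * μ ^ k / (Real.exp 1 * Real.sqrt t * (t / Real.exp 1) ^ k)
      ≤ zpPois μ k := by
    unfold zpPois
    apply div_le_div_of_nonneg_left (by positivity) hfac (factorial_le_stirling k hk)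
  refine le_trans ?_ step1
  -- step 2 : rewrite everything with exponentials
  have hμk : μ ^ k = Real.exp (t * Real.log μ) := by
    rw [← Real.exp_log hμ, ← Real.exp_nat_mul]
    norm_num
    exact Or.inl ht_def.symm
  have htk : (t / Real.exp 1) ^ k = Real.exp (t * (Real.log t - 1)) := by
    have : t / Real.exp 1 = Real.exp (Real.log t - 1) := by
      rw [Real.exp_sub, Real.exp_log ht]
    rw [this, ← Real.exp_nat_mul]
  rw [hμk, htk]
  have hre : Real.exp (-μ) * Real.exp (t * Real.log μ) /
      (Real.exp 1 * Real.sqrt t * Real.exp (t * (Real.log t - 1)))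
      = Real.exp (-μ + t * Real.log μ - t * (Real.log t - 1)) / (Real.exp 1 * Real.sqrt t) := by
    rw [show -μ + t * Real.log μ - t * (Real.log t - 1) =
      -μ + (t * Real.log μ - t * (Real.log t - 1)) by ring, Real.exp_add, Real.exp_sub]
    field_simp
  rw [hre]
  apply div_le_div_of_nonneg_right _ (by positivity)
  apply Real.exp_le_exp.2
  -- exponent inequality
  have hlog : Real.log t - Real.log μ ≤ t / μ - 1 := by
    have h := Real.log_le_sub_one_of_pos (show 0 < t / μ by positivity)
    rwa [Real.log_div (ne_of_gt ht) (ne_of_gt hμ)] at h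
  rw [div_le_iff₀ hμ]
  have key : t * (Real.log t - Real.log μ) * μ ≤ t * (t - μ) := by
    have h2 : t * (Real.log t - Real.log μ) ≤ t * (t / μ - 1) :=
      mul_le_mul_of_nonneg_left hlog ht.le
    have h3 : t * (t / μ - 1) * μ = t * (t - μ) := by field_simp
    nlinarith [mul_le_mul_of_nonneg_right h2 hμ.le]
  nlinarith

/-- Window anti-concentration for the Poisson weights. -/
noncomputable def zpDelta (c : ℝ) : ℝ :=
  Real.exp (-(c + 1) ^ 2) / (2 * Real.sqrt 2 * Real.exp 1)

lemma zpDelta_pos (c : ℝ) : 0 < zpDelta c := by unfold zpDelta; positivity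

lemma zpPois_interval (c : ℝ) (hc : 1 ≤ c) {μ : ℝ} (hμ : 4 * (c + 1) ^ 2 ≤ μ)
    {s : ℝ} (hs : |s| ≤ c * Real.sqrt μ) :
    zpDelta c ≤
      ∑ k ∈ Finset.Icc ⌈μ + s⌉₊ ⌊μ + s + Real.sqrt μ⌋₊, zpPois μ k := by
  unfold zpDelta
  set r := Real.sqrt μ with hr_def
  have hμpos : (0:ℝ) < μ := by nlinarith
  have hr2 : r ^ 2 = μ := Real.sq_sqrt hμpos.le
  have hrpos : 0 < r := Real.sqrt_pos.2 hμpos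
  have hrge : 2 * (c + 1) ≤ r := by
    rw [hr_def]
    have : Real.sqrt ((2*(c+1))^2) ≤ Real.sqrt μ := by
      apply Real.sqrt_le_sqrt; nlinarith
    rwa [Real.sqrt_sq (by nlinarith)] at this
  set a := μ + s with ha_def
  have hsabs1 : -(c*r) ≤ s := by have := (abs_le.1 hs).1; linarith
  have hsabs2 : s ≤ c*r := (abs_le.1 hs).2
  have hapos : 0 < a := by nlinarith
  set n₁ := ⌈a⌉₊ with hn1_def
  set n₂ := ⌊a + r⌋₊ with hn2_def
  have hn1ge : (a : ℝ) ≤ n₁ := Nat.le_ceil a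
  have hn1lt : (n₁ : ℝ) < a + 1 := Nat.ceil_lt_add_one hapos.le
  have hn2le : (n₂ : ℝ) ≤ a + r := Nat.floor_le (by positivity)
  have hn2gt : a + r - 1 < (n₂ : ℝ) := by
    have := Nat.lt_floor_add_one (a + r); linarith
  have hn1pos : 1 ≤ n₁ := by
    rw [hn1_def]; exact Nat.one_le_ceil_iff.2 hapos
  have hn12 : n₁ ≤ n₂ := by
    have : (n₁ : ℝ) < (n₂ : ℝ) := by nlinarith
    exact_mod_cast this.le
  -- cardinality bound
  have hcard : (r / 2 : ℝ) ≤ ((Finset.Icc n₁ n₂).card : ℝ) := by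
    rw [Nat.card_Icc]
    have : ((n₂ + 1 - n₁ : ℕ) : ℝ) = (n₂ : ℝ) + 1 - n₁ := by
      have : n₁ ≤ n₂ + 1 := le_trans hn12 (Nat.le_succ _)
      push_cast [Nat.cast_sub this]
      ring
    rw [this]; nlinarith
  -- pointwise bound
  have hpt : ∀ k ∈ Finset.Icc n₁ n₂,
      Real.exp (-(c+1)^2) / (Real.exp 1 * (Real.sqrt 2 * r)) ≤ zpPois μ k := by
    intro k hk
    rw [Finset.mem_Icc] at hk
    have hk1 : 1 ≤ k := le_trans hn1pos hk.1
    have hkl : (a : ℝ) ≤ k := le_trans hn1ge (by exact_mod_cast hk.1)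
    have hku : (k : ℝ) ≤ a + r := le_trans (by exact_mod_cast hk.2) hn2le
    have hk2μ : (k : ℝ) ≤ 2 * μ := by nlinarith
    refine le_trans ?_ (zpPois_lower hμpos k hk1)
    have hsqk : Real.sqrt k ≤ Real.sqrt 2 * r := by
      rw [hr_def, ← Real.sqrt_mul (by norm_num : (0:ℝ) ≤ 2)]
      exact Real.sqrt_le_sqrt hk2μ
    have hexp : Real.exp (-(c+1)^2) ≤ Real.exp (-((k:ℝ) - μ)^2 / μ) := by
      apply Real.exp_le_exp.2
      rw [neg_div, neg_le_neg_iff, div_le_iff₀ hμpos]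
      have h1 : -((c+1) * r) ≤ (k:ℝ) - μ := by linarith
      have h2 : (k:ℝ) - μ ≤ (c+1) * r := by linarith
      have h3 := sq_le_sq' h1 h2
      nlinarith [h3, hr2]
    have hd : (0:ℝ) < Real.exp 1 * Real.sqrt k := by positivity
    exact div_le_div₀ (Real.exp_pos _).le hexp hd
      (mul_le_mul_of_nonneg_left hsqk (Real.exp_pos 1).le)
  -- combine
  calc Real.exp (-(c + 1) ^ 2) / (2 * Real.sqrt 2 * Real.exp 1)
      = (r / 2) * (Real.exp (-(c+1)^2) / (Real.exp 1 * (Real.sqrt 2 * r))) := by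
        field_simp
    _ ≤ ((Finset.Icc n₁ n₂).card : ℝ) *
        (Real.exp (-(c+1)^2) / (Real.exp 1 * (Real.sqrt 2 * r))) := by
        apply mul_le_mul_of_nonneg_right hcard (by positivity)
    _ ≤ ∑ k ∈ Finset.Icc n₁ n₂, zpPois μ k := by
        have := Finset.card_nsmul_le_sum (Finset.Icc n₁ n₂)
          (fun k => zpPois μ k) _ hpt
        simpa [nsmul_eq_mul] using this

noncomputable def zpDel (κ : ℝ) : ℝ :=
  min (Real.exp (-(16 * (κ + 2) ^ 2))) (zpDelta 1 * zpDelta (κ + 1))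

lemma zpDel_pos (κ : ℝ) : 0 < zpDel κ :=
  lt_min (Real.exp_pos _) (mul_pos (zpDelta_pos 1) (zpDelta_pos _))

lemma zpDel_le_one (κ : ℝ) : zpDel κ ≤ 1 :=
  le_trans (min_le_left _ _) (Real.exp_le_one_iff.2 (neg_nonpos.2 (by positivity)))

/-- product of two `ℕ`-indexed ENNReal sums -/
lemma tsum_prod_mul (g h : ℕ → ENNReal) :
    ∑' y : ℕ × ℕ, g y.1 * h y.2 = (∑' a, g a) * (∑' b, h b) := by
  rw [ENNReal.tsum_prod']
  simp_rw [ENNReal.tsum_mul_left]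
  rw [ENNReal.tsum_mul_right]

/-- the key pair bound -/
lemma pair_sum_le {κ lam mu : ℝ} (hκ : 0 ≤ κ) (hmu : 0 < mu) (hml : mu ≤ lam)
    (hgap : lam - mu ≤ κ * Real.sqrt mu) :
    ∑' y : ℕ × ℕ, (if y.1 < y.2 then
        ENNReal.ofReal (zpPois mu y.1) * ENNReal.ofReal (zpPois lam y.2) else 0)
      ≤ ENNReal.ofReal (1 - zpDel κ) := by
  have hlam : 0 < lam := lt_of_lt_of_le hmu hml
  set f : ℕ × ℕ → ENNReal := fun y =>
    ENNReal.ofReal (zpPois mu y.1) * ENNReal.ofReal (zpPois lam y.2) with hf_def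
  have htotal : ∑' y : ℕ × ℕ, f y = 1 := by
    rw [hf_def]
    rw [tsum_prod_mul (fun a => ENNReal.ofReal (zpPois mu a)) (fun b => ENNReal.ofReal (zpPois lam b))]
    rw [zpPois_tsum_ofReal mu hmu.le, zpPois_tsum_ofReal lam hlam.le, one_mul]
  set S := ∑' y : ℕ × ℕ, (if y.1 < y.2 then f y else 0) with hS_def
  set A := ∑' y : ℕ × ℕ, (if y.1 < y.2 then 0 else f y) with hA_def
  have hsplit : S + A = 1 := by
    rw [hS_def, hA_def, ← ENNReal.tsum_add, ← htotal]
    congr 1; funext y; split_ifs <;> simp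
  -- lower bound on A
  have hAge : ENNReal.ofReal (zpDel κ) ≤ A := by
    by_cases hcase : lam ≤ 16 * (κ + 2) ^ 2
    · -- small case : A ≥ P(second coordinate = 0)
      have h0 : ∑' w : ℕ, (fun y : ℕ × ℕ => if y.1 < y.2 then 0 else f y) (w, 0) ≤ A := by
        rw [hA_def]
        exact ENNReal.tsum_comp_le_tsum_of_injective
          (f := fun w : ℕ => ((w, 0) : ℕ × ℕ)) (fun a b hab => by simpa using hab) _
      refine le_trans ?_ h0
      have : ∀ w : ℕ, (fun y : ℕ × ℕ => if y.1 < y.2 then 0 else f y) (w, 0)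
          = ENNReal.ofReal (zpPois mu w) * ENNReal.ofReal (zpPois lam 0) := by
        intro w; simp [hf_def]
      rw [tsum_congr this, ENNReal.tsum_mul_right, zpPois_tsum_ofReal mu hmu.le, one_mul]
      apply ENNReal.ofReal_le_ofReal
      refine le_trans (min_le_left _ _) ?_
      unfold zpPois
      rw [pow_zero, Nat.factorial_zero]
      simp only [Nat.cast_one, mul_one, div_one]
      exact Real.exp_le_exp.2 (by linarith)
    · -- large case
      push_neg at hcase
      have hsl : Real.sqrt lam ≥ 4 * (κ + 2) := by
        have h1 : ((4 * (κ+2)) : ℝ) = Real.sqrt ((4 * (κ+2))^2) := by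
          rw [Real.sqrt_sq (by positivity)]
        rw [h1]
        apply Real.sqrt_le_sqrt; nlinarith
      have hsl2 : Real.sqrt lam ^ 2 = lam := Real.sq_sqrt hlam.le
      have hmuhalf : lam / 2 ≤ mu := by
        have h2 : κ * Real.sqrt mu ≤ κ * Real.sqrt lam :=
          mul_le_mul_of_nonneg_left (Real.sqrt_le_sqrt hml) hκ
        nlinarith [Real.sqrt_nonneg lam]
      have hmubig : 8 * (κ + 2) ^ 2 ≤ mu := by nlinarith
      have hsmu1 : 1 ≤ Real.sqrt mu := by
        have : (1:ℝ) = Real.sqrt 1 := by simp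
        rw [this]; apply Real.sqrt_le_sqrt; nlinarith
      set cc := ⌈lam⌉₊ with hcc_def
      have hcc_ge : lam ≤ cc := Nat.le_ceil lam
      have hcc_lt : (cc : ℝ) < lam + 1 := Nat.ceil_lt_add_one hlam.le
      -- factorized lower bound
      set F : ℕ → ENNReal := fun w => if cc ≤ w then ENNReal.ofReal (zpPois mu w) else 0 with hF_def
      set G : ℕ → ENNReal := fun u => if u ≤ cc then ENNReal.ofReal (zpPois lam u) else 0 with hG_def
      have hpt : ∀ y : ℕ × ℕ, F y.1 * G y.2 ≤ (if y.1 < y.2 then 0 else f y) := by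
        intro y
        rw [hF_def, hG_def]
        by_cases h1 : cc ≤ y.1
        · by_cases h2 : y.2 ≤ cc
          · have : ¬ (y.1 < y.2) := by omega
            simp [h1, h2, this, hf_def, mul_comm]
          · simp [h2]
        · simp [h1]
      have hfact : (∑' w, F w) * (∑' u, G u) ≤ A := by
        rw [hA_def, ← tsum_prod_mul]
        exact Summable.tsum_le_tsum hpt ENNReal.summable ENNReal.summable
      refine le_trans ?_ hfact
      -- lower bound for G via interval lemma at lam, s = -sqrt lam
      have hG_lb : ENNReal.ofReal (zpDelta 1) ≤ ∑' u, G u := by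
        have hiv := zpPois_interval 1 le_rfl (μ := lam) (by nlinarith)
          (s := -Real.sqrt lam) (by rw [abs_neg, abs_of_nonneg (Real.sqrt_nonneg _), one_mul])
        have hIcc : ∀ k ∈ Finset.Icc ⌈lam + -Real.sqrt lam⌉₊ ⌊lam + -Real.sqrt lam + Real.sqrt lam⌋₊,
            k ≤ cc := by
          intro k hk
          rw [Finset.mem_Icc] at hk
          have h1 : (k:ℝ) ≤ ⌊lam + -Real.sqrt lam + Real.sqrt lam⌋₊ := by exact_mod_cast hk.2
          have h2 : (⌊lam + -Real.sqrt lam + Real.sqrt lam⌋₊ : ℝ) ≤ lam := by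
            have : lam + -Real.sqrt lam + Real.sqrt lam = lam := by ring
            rw [this]; exact Nat.floor_le hlam.le
          have : (k : ℝ) ≤ (cc : ℝ) := by linarith
          exact_mod_cast this
        calc ENNReal.ofReal (zpDelta 1)
            ≤ ENNReal.ofReal (∑ k ∈ Finset.Icc ⌈lam + -Real.sqrt lam⌉₊
                ⌊lam + -Real.sqrt lam + Real.sqrt lam⌋₊, zpPois lam k) :=
              ENNReal.ofReal_le_ofReal hiv
          _ = ∑ k ∈ Finset.Icc ⌈lam + -Real.sqrt lam⌉₊
                ⌊lam + -Real.sqrt lam + Real.sqrt lam⌋₊, ENNReal.ofReal (zpPois lam k) :=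
              ENNReal.ofReal_sum_of_nonneg (fun k _ => zpPois_nonneg hlam.le k)
          _ = ∑ k ∈ Finset.Icc ⌈lam + -Real.sqrt lam⌉₊
                ⌊lam + -Real.sqrt lam + Real.sqrt lam⌋₊, G k := by
              apply Finset.sum_congr rfl
              intro k hk
              rw [hG_def]
              simp [hIcc k hk]
          _ ≤ ∑' u, G u := ENNReal.sum_le_tsum _
      -- lower bound for F via interval lemma at mu, s = cc - mu
      have hF_lb : ENNReal.ofReal (zpDelta (κ + 1)) ≤ ∑' w, F w := by
        have hsle : (cc : ℝ) - mu ≤ (κ + 1) * Real.sqrt mu := by nlinarith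
        have hsge : (0:ℝ) ≤ (cc : ℝ) - mu := by linarith
        have hiv := zpPois_interval (κ + 1) (by linarith) (μ := mu) (by nlinarith)
          (s := (cc : ℝ) - mu) (by rw [abs_of_nonneg hsge]; exact hsle)
        have hIcc : ∀ k ∈ Finset.Icc ⌈mu + ((cc:ℝ) - mu)⌉₊ ⌊mu + ((cc:ℝ) - mu) + Real.sqrt mu⌋₊,
            cc ≤ k := by
          intro k hk
          rw [Finset.mem_Icc] at hk
          have h1 : ⌈mu + ((cc:ℝ) - mu)⌉₊ = cc := by
            have : mu + ((cc:ℝ) - mu) = (cc:ℝ) := by ring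
            rw [this, Nat.ceil_natCast]
          omega
        calc ENNReal.ofReal (zpDelta (κ+1))
            ≤ ENNReal.ofReal (∑ k ∈ Finset.Icc ⌈mu + ((cc:ℝ) - mu)⌉₊
                ⌊mu + ((cc:ℝ) - mu) + Real.sqrt mu⌋₊, zpPois mu k) :=
              ENNReal.ofReal_le_ofReal hiv
          _ = ∑ k ∈ Finset.Icc ⌈mu + ((cc:ℝ) - mu)⌉₊
                ⌊mu + ((cc:ℝ) - mu) + Real.sqrt mu⌋₊, ENNReal.ofReal (zpPois mu k) :=
              ENNReal.ofReal_sum_of_nonneg (fun k _ => zpPois_nonneg hmu.le k)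
          _ = ∑ k ∈ Finset.Icc ⌈mu + ((cc:ℝ) - mu)⌉₊
                ⌊mu + ((cc:ℝ) - mu) + Real.sqrt mu⌋₊, F k := by
              apply Finset.sum_congr rfl
              intro k hk
              rw [hF_def]
              simp [hIcc k hk]
          _ ≤ ∑' w, F w := ENNReal.sum_le_tsum _
      calc ENNReal.ofReal (zpDel κ)
          ≤ ENNReal.ofReal (zpDelta (κ+1) * zpDelta 1) := by
            apply ENNReal.ofReal_le_ofReal
            rw [mul_comm]
            exact min_le_right _ _
        _ = ENNReal.ofReal (zpDelta (κ+1)) * ENNReal.ofReal (zpDelta 1) :=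
            ENNReal.ofReal_mul (zpDelta_pos _).le
        _ ≤ (∑' w, F w) * (∑' u, G u) := mul_le_mul' hF_lb hG_lb
  -- conclude
  have hfin : ENNReal.ofReal (zpDel κ) ≠ ⊤ := ENNReal.ofReal_ne_top
  have : S + ENNReal.ofReal (zpDel κ) ≤ 1 := by
    calc S + ENNReal.ofReal (zpDel κ) ≤ S + A := add_le_add_right hAge S
      _ = 1 := hsplit
  have hS1 : S ≤ 1 - ENNReal.ofReal (zpDel κ) := ENNReal.le_sub_of_add_le_right hfin this
  calc S ≤ 1 - ENNReal.ofReal (zpDel κ) := hS1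
    _ = ENNReal.ofReal (1 - zpDel κ) := by
      rw [ENNReal.ofReal_sub _ (zpDel_pos κ).le, ENNReal.ofReal_one]

lemma tsum_pi_prod : ∀ (J : ℕ) (h : Fin J → (ℕ × ℕ) → ENNReal),
    ∑' v : Fin J → ℕ × ℕ, ∏ j, h j (v j) = ∏ j, ∑' y, h j y := by
  intro J
  induction J with
  | zero =>
    intro h
    simp only [Finset.univ_eq_empty, Finset.prod_empty]
    exact tsum_eq_single (fun x => x.elim0) (fun v hv => by
      exact absurd (funext fun x => x.elim0) (Ne.symm hv)) |>.trans rfl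
  | succ J ih =>
    intro h
    have he := (Fin.consEquiv (fun _ : Fin (J + 1) => ℕ × ℕ)).tsum_eq
      (f := fun v : Fin (J+1) → ℕ × ℕ => ∏ j, h j (v j))
    rw [← he]
    have : ∀ (p : (ℕ × ℕ) × (Fin J → ℕ × ℕ)),
        (∏ j, h j ((Fin.consEquiv (fun _ : Fin (J + 1) => ℕ × ℕ)) p j)) =
          h 0 p.1 * ∏ j : Fin J, h j.succ (p.2 j) := by
      intro p
      rw [Fin.prod_univ_succ]
      simp [Fin.consEquiv]
    rw [tsum_congr this, ENNReal.tsum_prod']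
    simp_rw [ENNReal.tsum_mul_left, ENNReal.tsum_mul_right]
    rw [ih (fun j => h j.succ), Fin.prod_univ_succ]

lemma main_bound {Ω : Type*} [MeasurableSpace Ω] (P : Measure Ω)
    (X : ℕ → Ω → ℕ) (lam : ℕ → ℝ)
    (hind : iIndepFun (fun i : {i : ℕ // 1 ≤ i} => X i) P)
    (hpmf : ∀ i : ℕ, 1 ≤ i → ∀ k : ℕ,
      P {ω | X i ω = k} = ENNReal.ofReal (zpPois (lam i) k))
    (m J : ℕ) (hm : 2 * J + 1 ≤ m) (q : ENNReal)
    (hq : ∀ j : ℕ, j < J →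
      (∑' y : ℕ × ℕ, (if y.1 < y.2 then
        ENNReal.ofReal (zpPois (lam (m - 1 - 2 * j)) y.1) *
          ENNReal.ofReal (zpPois (lam (m - 2 - 2 * j)) y.2) else 0)) ≤ q) :
    P {ω | ∀ i : ℕ, 1 ≤ i → i < m → X (i + 1) ω < X i ω} ≤ q ^ J := by
  classical
  set h : Fin J → (ℕ × ℕ) → ENNReal := fun j y =>
    if y.1 < y.2 then
      ENNReal.ofReal (zpPois (lam (m - 1 - 2 * j.val)) y.1) *
        ENNReal.ofReal (zpPois (lam (m - 2 - 2 * j.val)) y.2) else 0 with hh_def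
  have hidx : ∀ (t : Fin J × Fin 2), 1 ≤ m - 1 - (2 * t.1.val + t.2.val) := by
    rintro ⟨j, b⟩
    have hj := j.isLt
    have hb := b.isLt
    simp only at *
    omega
  set g2 : Fin J × Fin 2 → {i : ℕ // 1 ≤ i} := fun t =>
    ⟨m - 1 - (2 * t.1.val + t.2.val), hidx t⟩ with hg2_def
  have hg2inj : Function.Injective g2 := by
    rintro ⟨j, b⟩ ⟨j', b'⟩ hEq
    have hj := j.isLt; have hb := b.isLt; have hj' := j'.isLt; have hb' := b'.isLt
    simp only [hg2_def, Subtype.mk.injEq] at hEq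
    have : 2 * j.val + b.val = 2 * j'.val + b'.val := by omega
    have h1 : j.val = j'.val := by omega
    have h2 : b.val = b'.val := by omega
    exact Prod.ext (Fin.ext h1) (Fin.ext h2)
  set vl : (Fin J → ℕ × ℕ) → Fin J × Fin 2 → ℕ := fun v t =>
    if t.2.val = 0 then (v t.1).1 else (v t.1).2 with hvl_def
  set Box : (Fin J → ℕ × ℕ) → Set Ω := fun v =>
    if (∀ j, (v j).1 < (v j).2) then
      (⋂ t : Fin J × Fin 2, {ω | X (g2 t).val ω = vl v t}) else ∅ with hBox_def
  -- covering
  have hcover : {ω | ∀ i : ℕ, 1 ≤ i → i < m → X (i + 1) ω < X i ω} ⊆ ⋃ v, Box v := by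
    intro ω hω
    simp only [Set.mem_setOf_eq] at hω
    refine Set.mem_iUnion.2 ⟨fun j => (X (m - 1 - 2 * j.val) ω, X (m - 2 - 2 * j.val) ω), ?_⟩
    have hconstr : ∀ j : Fin J,
        X (m - 1 - 2 * j.val) ω < X (m - 2 - 2 * j.val) ω := by
      intro j
      have hj := j.isLt
      have h1 : (1:ℕ) ≤ m - 2 - 2 * j.val := by omega
      have h2 : m - 2 - 2 * j.val < m := by omega
      have h3 : m - 2 - 2 * j.val + 1 = m - 1 - 2 * j.val := by omega
      have := hω (m - 2 - 2 * j.val) h1 h2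
      rwa [h3] at this
    rw [hBox_def]
    simp only
    rw [if_pos hconstr]
    refine Set.mem_iInter.2 ?_
    rintro ⟨j, b⟩
    have hj := j.isLt
    fin_cases b
    · simp only [Set.mem_setOf_eq, hvl_def, hg2_def]
      have e : m - 1 - (2 * j.val + (0:ℕ)) = m - 1 - 2 * j.val := by omega
      simp [e]
    · simp only [Set.mem_setOf_eq, hvl_def, hg2_def]
      have e : m - 1 - (2 * j.val + (1:ℕ)) = m - 2 - 2 * j.val := by omega
      simp [e]
  -- per-v bound
  have hbox_le : ∀ v : Fin J → ℕ × ℕ, P (Box v) ≤ ∏ j, h j (v j) := by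
    intro v
    by_cases hv : ∀ j, (v j).1 < (v j).2
    · rw [hBox_def]
      simp only
      rw [if_pos hv]
      set valS : {i : ℕ // 1 ≤ i} → ℕ := fun i =>
        if ht : (m - 1 - i.val) / 2 < J then
          (if (m - 1 - i.val) % 2 = 0 then (v ⟨(m - 1 - i.val) / 2, ht⟩).1
            else (v ⟨(m - 1 - i.val) / 2, ht⟩).2)
        else 0 with hvalS_def
      have hkey : ∀ t : Fin J × Fin 2, valS (g2 t) = vl v t := by
        rintro ⟨j, b⟩
        have hj := j.isLt; have hb := b.isLt
        simp only [hvalS_def, hg2_def, hvl_def]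
        have e1 : m - 1 - (m - 1 - (2 * j.val + b.val)) = 2 * j.val + b.val := by omega
        rw [e1]
        have e2 : (2 * j.val + b.val) / 2 = j.val := by omega
        have e3 : (2 * j.val + b.val) % 2 = b.val := by omega
        have hlt : (2 * j.val + b.val) / 2 < J := by omega
        rw [dif_pos hlt]
        have e4 : (⟨(2 * j.val + b.val) / 2, hlt⟩ : Fin J) = j := Fin.ext e2
        rw [e4, e3]
      -- identify the intersection with a finset intersection
      set S : Finset {i : ℕ // 1 ≤ i} := Finset.image g2 Finset.univ with hS_def
      have hset : (⋂ t : Fin J × Fin 2, {ω | X (g2 t).val ω = vl v t})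
          = ⋂ i ∈ S, (fun ω => X i.val ω) ⁻¹' {valS i} := by
        ext ω
        simp only [Set.mem_iInter, Set.mem_setOf_eq, Set.mem_preimage,
          Set.mem_singleton_iff, hS_def, Finset.mem_image, Finset.mem_univ, true_and]
        constructor
        · rintro H i ⟨t, rfl⟩
          rw [hkey t]
          exact H t
        · intro H t
          rw [← hkey t]
          exact H (g2 t) ⟨t, rfl⟩
      rw [hset]
      have hprod := hind.measure_inter_preimage_eq_mul S
        (sets := fun i => {valS i}) (fun i _ => measurableSet_singleton _)
      rw [hprod]
      rw [Finset.prod_image (fun t _ t' _ htt => hg2inj htt)]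
      have hterm : ∀ t : Fin J × Fin 2,
          P ((fun ω => X (g2 t).val ω) ⁻¹' {valS (g2 t)})
            = ENNReal.ofReal (zpPois (lam (g2 t).val) (vl v t)) := by
        intro t
        have : ((fun ω => X (g2 t).val ω) ⁻¹' {valS (g2 t)}) = {ω | X (g2 t).val ω = vl v t} := by
          ext ω
          simp [hkey t]
        rw [this]
        exact hpmf (g2 t).val (g2 t).2 (vl v t)
      rw [Finset.prod_congr rfl (fun t _ => hterm t)]
      rw [Fintype.prod_prod_type]
      apply le_of_eq
      apply Finset.prod_congr rfl
      intro j _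
      rw [Fin.prod_univ_two]
      have hg20 : (g2 (j, 0)).val = m - 1 - 2 * j.val := by
        simp [hg2_def]
      have hg21 : (g2 (j, 1)).val = m - 2 - 2 * j.val := by
        have hj := j.isLt
        simp only [hg2_def]
        omega
      have hvl0 : vl v (j, 0) = (v j).1 := by simp [hvl_def]
      have hvl1 : vl v (j, 1) = (v j).2 := by simp [hvl_def]
      rw [hg20, hg21, hvl0, hvl1, hh_def]
      simp only [if_pos (hv j)]
    · rw [hBox_def]
      simp only
      rw [if_neg hv]
      simp
  -- assemble
  calc P {ω | ∀ i : ℕ, 1 ≤ i → i < m → X (i + 1) ω < X i ω}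
      ≤ P (⋃ v, Box v) := measure_mono hcover
    _ ≤ ∑' v : Fin J → ℕ × ℕ, P (Box v) := measure_iUnion_le _
    _ ≤ ∑' v : Fin J → ℕ × ℕ, ∏ j, h j (v j) :=
        ENNReal.tsum_le_tsum hbox_le
    _ = ∏ j : Fin J, ∑' y, h j y := tsum_pi_prod J h
    _ ≤ ∏ _j : Fin J, q := by
        apply Finset.prod_le_prod'
        intro j _
        rw [hh_def]
        exact hq j.val j.isLt
    _ = q ^ J := by
        rw [Finset.prod_const, Finset.card_univ, Fintype.card_fin]

lemma zp_gap_bound {α C N : ℝ} (hα : 1 < α) (hC : 0 < C) (hN : 1 ≤ N) {i : ℕ} (hi1 : 1 ≤ i)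
    (hi : C / 2 * N ^ ((1:ℝ)/(α+2)) ≤ (i:ℝ)) :
    N * (i:ℝ) ^ (-α) - N * ((i:ℝ)+1) ^ (-α) ≤
      (α * (2:ℝ) ^ (α/2) * (C/2) ^ (-(1+α/2))) * Real.sqrt (N * ((i:ℝ)+1) ^ (-α)) := by
  set x := (i:ℝ) with hx_def
  have hx : 1 ≤ x := by simp only [hx_def]; exact_mod_cast hi1
  have hx0 : 0 < x := by linarith
  have hx1 : 0 < x + 1 := by linarith
  have hN0 : 0 < N := by linarith
  have hα0 : 0 < α := by linarith
  -- Bernoulli : 1 - α/(x+1) ≤ (x/(x+1))^α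
  have hbern : 1 - α / (x+1) ≤ (x/(x+1)) ^ α := by
    have hs : -1 ≤ x/(x+1) - 1 := by
      have : 0 ≤ x/(x+1) := by positivity
      linarith
    have := one_add_mul_self_le_rpow_one_add hs hα.le
    have he : 1 + (x/(x+1) - 1) = x/(x+1) := by ring
    rw [he] at this
    have he2 : 1 + α * (x/(x+1) - 1) = 1 - α / (x+1) := by
      field_simp
      ring
    linarith [he2 ▸ this]
  -- step a
  have hfactor : (x+1) ^ (-α) = x ^ (-α) * (x/(x+1)) ^ α := by
    rw [Real.div_rpow hx0.le hx1.le, Real.rpow_neg hx0.le, Real.rpow_neg hx1.le]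
    field_simp
  have ha : N * x ^ (-α) - N * (x+1) ^ (-α) ≤ N * x ^ (-α) * α / (x+1) := by
    rw [hfactor]
    have h1 : N * x ^ (-α) - N * (x ^ (-α) * (x/(x+1)) ^ α)
        = N * x ^ (-α) * (1 - (x/(x+1)) ^ α) := by ring
    rw [h1]
    have h2 : 1 - (x/(x+1)) ^ α ≤ α / (x+1) := by linarith
    have h3 : 0 ≤ N * x ^ (-α) := by positivity
    calc N * x ^ (-α) * (1 - (x/(x+1)) ^ α) ≤ N * x ^ (-α) * (α / (x+1)) :=
          mul_le_mul_of_nonneg_left h2 h3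
      _ = N * x ^ (-α) * α / (x+1) := by ring
  -- the exponent comparison at x vs x+1
  have hmain : x ^ (1 - α/2) ≤ (2:ℝ) ^ (α/2) * (x+1) ^ (1 - α/2) := by
    have h2x : x + 1 ≤ 2 * x := by linarith
    have h2a : (1:ℝ) ≤ (2:ℝ) ^ (α/2) :=
      Real.one_le_rpow (by norm_num) (by positivity)
    rcases le_or_gt 0 (1 - α/2) with he | he
    · calc x ^ (1 - α/2) ≤ (x+1) ^ (1 - α/2) :=
            Real.rpow_le_rpow hx0.le (by linarith) he
        _ = 1 * (x+1) ^ (1 - α/2) := (one_mul _).symm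
        _ ≤ (2:ℝ) ^ (α/2) * (x+1) ^ (1 - α/2) := by
            apply mul_le_mul_of_nonneg_right h2a (by positivity)
    · have hhalf : (x+1)/2 ≤ x := by linarith
      have hhalf0 : 0 < (x+1)/2 := by linarith
      calc x ^ (1 - α/2) ≤ ((x+1)/2) ^ (1 - α/2) :=
            Real.rpow_le_rpow_of_nonpos hhalf0 hhalf he.le
        _ = (x+1) ^ (1 - α/2) / (2:ℝ) ^ (1 - α/2) := Real.div_rpow hx1.le (by norm_num : (0:ℝ) ≤ 2) _
        _ = (x+1) ^ (1 - α/2) * (2:ℝ) ^ (-(1 - α/2)) := by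
            rw [Real.rpow_neg (by norm_num : (0:ℝ) ≤ 2)]
            ring
        _ ≤ (x+1) ^ (1 - α/2) * (2:ℝ) ^ (α/2) := by
            apply mul_le_mul_of_nonneg_left _ (by positivity)
            exact Real.rpow_le_rpow_of_exponent_le (by norm_num) (by linarith)
        _ = (2:ℝ) ^ (α/2) * (x+1) ^ (1 - α/2) := by ring
  -- goal 1
  have hg1 : N * x ^ (-α) * α / (x+1) ≤ α * (2:ℝ)^(α/2) * N * x ^ (-(1+α/2)) * (x+1) ^ (-(α/2)) := by
    rw [div_le_iff₀ hx1]
    have e1 : (x+1) ^ (-(α/2)) * (x+1) = (x+1) ^ (1 - α/2) := by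
      nth_rewrite 2 [← Real.rpow_one (x+1)]
      rw [← Real.rpow_add hx1]
      ring_nf
    have e2 : x ^ (-α) = x ^ (-(1+α/2)) * x ^ (1 - α/2) := by
      rw [← Real.rpow_add hx0]
      ring_nf
    calc N * x ^ (-α) * α = α * N * x ^ (-(1+α/2)) * x ^ (1 - α/2) := by rw [e2]; ring
      _ ≤ α * N * x ^ (-(1+α/2)) * ((2:ℝ)^(α/2) * (x+1) ^ (1 - α/2)) := by
          apply mul_le_mul_of_nonneg_left hmain (by positivity)
      _ = α * (2:ℝ)^(α/2) * N * x ^ (-(1+α/2)) * ((x+1) ^ (-(α/2)) * (x+1)) := by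
          rw [e1]; ring
      _ = α * (2:ℝ)^(α/2) * N * x ^ (-(1+α/2)) * (x+1) ^ (-(α/2)) * (x+1) := by ring
  -- key : N^(1/2) * x^(-(1+α/2)) ≤ (C/2)^(-(1+α/2))
  have hkey : N ^ ((1:ℝ)/2) * x ^ (-(1+α/2)) ≤ (C/2) ^ (-(1+α/2)) := by
    have hc2 : 0 < C/2 := by linarith
    have hNr : 0 < N ^ ((1:ℝ)/(α+2)) := Real.rpow_pos_of_pos hN0 _
    have hlhs0 : 0 < C/2 * N ^ ((1:ℝ)/(α+2)) := by positivity
    have hpow := Real.rpow_le_rpow hlhs0.le hi (by positivity : (0:ℝ) ≤ 1 + α/2)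
    rw [Real.mul_rpow hc2.le hNr.le, ← Real.rpow_mul hN0.le] at hpow
    have hexp : (1:ℝ)/(α+2) * (1 + α/2) = 1/2 := by
      field_simp
      ring
    rw [hexp] at hpow
    -- hpow : (C/2)^(1+α/2) * N^(1/2) ≤ x^(1+α/2)
    have hX0 : 0 < x ^ (1+α/2) := Real.rpow_pos_of_pos hx0 _
    have hc0 : 0 < (C/2) ^ (1+α/2) := Real.rpow_pos_of_pos hc2 _
    have hN12 : 0 < N ^ ((1:ℝ)/2) := Real.rpow_pos_of_pos hN0 _
    rw [Real.rpow_neg hx0.le, Real.rpow_neg hc2.le]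
    calc N ^ ((1:ℝ)/2) * (x ^ (1+α/2))⁻¹
        ≤ N ^ ((1:ℝ)/2) * ((C/2) ^ (1+α/2) * N ^ ((1:ℝ)/2))⁻¹ := by
          apply mul_le_mul_of_nonneg_left _ hN12.le
          exact inv_anti₀ (by positivity) hpow
      _ = ((C/2) ^ (1+α/2))⁻¹ := by
          field_simp
  -- sqrt rewrite
  have hb : Real.sqrt (N * (x+1) ^ (-α)) = N ^ ((1:ℝ)/2) * (x+1) ^ (-(α/2)) := by
    rw [Real.sqrt_eq_rpow, Real.mul_rpow hN0.le (by positivity), ← Real.rpow_mul hx1.le]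
    congr 1
    ring
  -- final assembly
  have hNsplit : N = N ^ ((1:ℝ)/2) * N ^ ((1:ℝ)/2) := by
    rw [← Real.rpow_add hN0]
    norm_num
  have hfin : α * (2:ℝ)^(α/2) * N * x ^ (-(1+α/2)) * (x+1) ^ (-(α/2)) ≤
      (α * (2:ℝ) ^ (α/2) * (C/2) ^ (-(1+α/2))) * (N ^ ((1:ℝ)/2) * (x+1) ^ (-(α/2))) := by
    have e : α * (2:ℝ)^(α/2) * N * x ^ (-(1+α/2)) * (x+1) ^ (-(α/2))
        = (α * (2:ℝ)^(α/2) * (N ^ ((1:ℝ)/2) * (x+1) ^ (-(α/2)))) * (N ^ ((1:ℝ)/2) * x ^ (-(1+α/2))) := by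
      nth_rewrite 1 [hNsplit]
      ring
    rw [e]
    have e2 : (α * (2:ℝ) ^ (α/2) * (C/2) ^ (-(1+α/2))) * (N ^ ((1:ℝ)/2) * (x+1) ^ (-(α/2)))
        = (α * (2:ℝ)^(α/2) * (N ^ ((1:ℝ)/2) * (x+1) ^ (-(α/2)))) * ((C/2) ^ (-(1+α/2))) := by
      ring
    rw [e2]
    apply mul_le_mul_of_nonneg_left hkey
    positivity
  rw [hb]
  exact le_trans ha (le_trans hg1 hfin)

open MeasureTheory ProbabilityTheory Filter

/-- The Zipf–Poisson ensemble with parameters `α > 1`, `N > 0`: the random variables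
`X i`, for integers `i ≥ 1`, are independent and `X i ~ Poisson(N * i^(-α))`. -/
def IsZipfPoisson {Ω : Type*} [MeasurableSpace Ω] (P : Measure Ω)
    (X : ℕ → Ω → ℕ) (α N : ℝ) : Prop :=
  iIndepFun (fun i : {i : ℕ // 1 ≤ i} => X i) P ∧
  ∀ i : ℕ, 1 ≤ i → ∀ k : ℕ,
    P {ω | X i ω = k} =
      ENNReal.ofReal (Real.exp (-(N * (i : ℝ) ^ (-α))) * (N * (i : ℝ) ^ (-α)) ^ k /
        (Nat.factorial k))

/-- Limit to correct ordering: if `n(N) ≥ C N^(1/(α+2))` for some `C > 0` and all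
large `N`, then `Pr(X₁ > X₂ > … > X_{n(N)}) → 0` as `N → ∞`. -/
theorem zipf_poisson_order_tendsto_zero
    {Ω : Type*} [MeasurableSpace Ω] (P : ℝ → Measure Ω)
    [∀ N, IsProbabilityMeasure (P N)]
    (X : ℕ → Ω → ℕ) (α : ℝ) (hα : 1 < α)
    (hzp : ∀ N : ℝ, 0 < N → IsZipfPoisson (P N) X α N)
    (C : ℝ) (hC : 0 < C)
    (n : ℝ → ℕ) (hn1 : ∀ N, 1 ≤ n N)
    (hn : ∀ᶠ N : ℝ in atTop, C * N ^ ((1 : ℝ) / (α + 2)) ≤ (n N : ℝ)) :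
    Tendsto
      (fun N : ℝ => P N {ω | ∀ i : ℕ, 1 ≤ i → i < n N → X (i + 1) ω < X i ω})
      atTop (nhds 0) := by
  classical
  set κ : ℝ := α * (2:ℝ) ^ (α/2) * (C/2) ^ (-(1+α/2)) with hκ_def
  have hκ0 : 0 ≤ κ := by
    rw [hκ_def]
    have h1 : (0:ℝ) < α := by linarith
    positivity
  set q : ENNReal := ENNReal.ofReal (1 - zpDel κ) with hq_def
  have hq1 : q < 1 := by
    rw [hq_def]
    exact ENNReal.ofReal_lt_one.2 (by linarith [zpDel_pos κ])
  -- the eventual bound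
  have hbound : ∀ᶠ N : ℝ in atTop,
      P N {ω | ∀ i : ℕ, 1 ≤ i → i < n N → X (i + 1) ω < X i ω} ≤ q ^ (n N / 4) := by
    filter_upwards [hn, eventually_ge_atTop (1:ℝ)] with N hnN hN1
    have hN0 : (0:ℝ) < N := by linarith
    obtain ⟨hind, hpmf⟩ := hzp N hN0
    set m := n N with hm_def
    have hm1 : 1 ≤ m := hn1 N
    refine main_bound (P N) X (fun i => N * (i:ℝ) ^ (-α)) hind ?_ m (m/4) (by omega) q ?_
    · intro i hi k
      exact hpmf i hi k
    · intro j hj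
      set i : ℕ := m - 2 - 2*j with hi_def
      have hidx1 : m - 1 - 2*j = i + 1 := by omega
      have hi1 : 1 ≤ i := by omega
      have h2i : m ≤ 2 * i := by omega
      have hcast : ((i:ℕ) + 1 : ℕ) = i + 1 := rfl
      have hcast2 : (((i+1 : ℕ)):ℝ) = (i:ℝ) + 1 := by push_cast; ring
      have hilb : C / 2 * N ^ ((1:ℝ)/(α+2)) ≤ (i:ℝ) := by
        have h1 : (m:ℝ) ≤ 2 * (i:ℝ) := by exact_mod_cast h2i
        nlinarith
      have hgap := zp_gap_bound hα hC hN1 hi1 hilb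
      rw [hidx1]
      have hmu0 : 0 < N * (((i+1:ℕ)):ℝ) ^ (-α) := by
        rw [hcast2]
        have : (0:ℝ) < (i:ℝ) + 1 := by positivity
        positivity
      have hml : N * (((i+1:ℕ)):ℝ) ^ (-α) ≤ N * ((i:ℕ):ℝ) ^ (-α) := by
        rw [hcast2]
        apply mul_le_mul_of_nonneg_left _ hN0.le
        apply Real.rpow_le_rpow_of_nonpos (by exact_mod_cast hi1) (by linarith) (by linarith)
      have hgap' : N * ((i:ℕ):ℝ) ^ (-α) - N * (((i+1:ℕ)):ℝ) ^ (-α) ≤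
          κ * Real.sqrt (N * (((i+1:ℕ)):ℝ) ^ (-α)) := by
        rw [hcast2]
        exact hgap
      exact pair_sum_le hκ0 hmu0 hml hgap'
  -- J → ∞
  have hJ : Tendsto (fun N : ℝ => n N / 4) atTop atTop := by
    rw [tendsto_atTop]
    intro b
    have hrt : Tendsto (fun N : ℝ => C * N ^ ((1:ℝ)/(α+2))) atTop atTop := by
      apply Tendsto.const_mul_atTop hC
      exact tendsto_rpow_atTop (by positivity)
    filter_upwards [hn, hrt.eventually_ge_atTop ((4*b+4 : ℕ):ℝ)] with N h1 h2
    have : ((4*b+4 : ℕ):ℝ) ≤ (n N : ℝ) := le_trans h2 h1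
    have h3 : 4*b+4 ≤ n N := by exact_mod_cast this
    omega
  have h0 : Tendsto (fun N : ℝ => q ^ (n N / 4)) atTop (nhds 0) :=
    (ENNReal.tendsto_pow_atTop_nhds_zero_of_lt_one hq1).comp hJ
  exact tendsto_of_tendsto_of_tendsto_of_le_of_le' tendsto_const_nhds h0
    (Filter.Eventually.of_forall (fun N => zero_le)) hbound
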